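/- Let c, m, ω be positive integers with ω ≥ 5 satisfying 2c(c+1)m = (2c−1)(ω+1) + 2, let Δ be a finite set of size ω, and let G be the group of all permutations of Ω = Δ × Δ of the form (α,β) ↦ (σ(α),τ(β)) or (α,β) ↦ (σ(β),τ(α)) with σ, τ ∈ Sym(Δ). Set k = c(c+1)m. Then there exist a positive integer λ and a nonempty finite collection ℬ of k-element subsets of Ω such that (Ω, ℬ) is a 2-(ω², k, λ) design, ℬ is invariant under G (indeed ℬ is a single G-orbit of subsets), and G acts transitively on the flags of (Ω, ℬ). -/

import Mathlib

open Finset Equiv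

namespace Stmt14Aux

set_option linter.unusedSectionVars false

/-- numeric block swap: swaps the `d`-blocks with indices `l₁` and `l₂`. -/
def nswap (d l₁ l₂ n : ℕ) : ℕ :=
  if n / d = l₁ then l₂ * d + n % d
  else if n / d = l₂ then l₁ * d + n % d
  else n

lemma key_div {d : ℕ} (hd : 0 < d) (l i : ℕ) (hi : i < d) :
    (l * d + i) / d = l ∧ (l * d + i) % d = i := by
  constructor
  · rw [Nat.add_comm, Nat.add_mul_div_right _ _ hd, Nat.div_eq_of_lt hi, Nat.zero_add]
  · rw [Nat.add_comm, Nat.add_mul_mod_self_right, Nat.mod_eq_of_lt hi]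

lemma nswap_invol {d : ℕ} (hd : 0 < d) (l₁ l₂ n : ℕ) :
    nswap d l₁ l₂ (nswap d l₁ l₂ n) = n := by
  have hmod : n % d < d := Nat.mod_lt _ hd
  have hdm : n / d * d + n % d = n := Nat.div_add_mod' n d
  unfold nswap
  by_cases h1 : n / d = l₁
  · rw [if_pos h1]
    rcases key_div hd l₂ (n % d) hmod with ⟨hdiv, hmodq⟩
    rw [hdiv, hmodq]
    by_cases h12 : l₂ = l₁
    · rw [if_pos h12, h12, ← h1, hdm]
    · rw [if_neg h12, if_pos rfl, ← h1, hdm]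
  · rw [if_neg h1]
    by_cases h2 : n / d = l₂
    · rw [if_pos h2]
      rcases key_div hd l₁ (n % d) hmod with ⟨hdiv, hmodq⟩
      rw [hdiv, hmodq, if_pos rfl, ← h2, hdm]
    · simp only [if_neg h1, if_neg h2]

lemma nswap_lt {ω d l₁ l₂ n : ℕ} (hd : 0 < d) (h1 : (l₁ + 1) * d ≤ ω)
    (h2 : (l₂ + 1) * d ≤ ω) (hn : n < ω) : nswap d l₁ l₂ n < ω := by
  have hmod : n % d < d := Nat.mod_lt _ hd
  unfold nswap
  by_cases hc1 : n / d = l₁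
  · rw [if_pos hc1]
    calc l₂ * d + n % d < l₂ * d + d := by omega
    _ = (l₂ + 1) * d := by ring
    _ ≤ ω := h2
  · rw [if_neg hc1]
    by_cases hc2 : n / d = l₂
    · rw [if_pos hc2]
      calc l₁ * d + n % d < l₁ * d + d := by omega
      _ = (l₁ + 1) * d := by ring
      _ ≤ ω := h1
    · rwa [if_neg hc2]

lemma div_lt_of_lt_mul' {d m n : ℕ} (hd : 0 < d) (h : n < d * m) : n / d < m :=
  Nat.div_lt_iff_lt_mul hd |>.mpr (by rw [Nat.mul_comm]; exact h)

lemma lt_mul_of_div_eq {d m n l : ℕ} (hd : 0 < d) (hl : l < m) (h : n / d = l) :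
    n < d * m := by
  have : n / d < m := h ▸ hl
  have := (Nat.div_lt_iff_lt_mul hd).mp this
  rw [Nat.mul_comm] at this
  exact this

lemma nswap_thresh {d m l₁ l₂ n : ℕ} (hd : 0 < d) (hl₁ : l₁ < m) (hl₂ : l₂ < m) :
    (nswap d l₁ l₂ n < d * m ↔ n < d * m) := by
  have hmod : n % d < d := Nat.mod_lt _ hd
  unfold nswap
  by_cases hc1 : n / d = l₁
  · rw [if_pos hc1]
    have hnn : n < d * m := lt_mul_of_div_eq hd hl₁ hc1
    have : l₂ * d + n % d < d * m := by
      have hexp : (l₂ + 1) * d = l₂ * d + d := by ring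
      calc l₂ * d + n % d < (l₂ + 1) * d := by omega
      _ ≤ m * d := Nat.mul_le_mul_right d hl₂
      _ = d * m := Nat.mul_comm _ _
    simp [this, hnn]
  · rw [if_neg hc1]
    by_cases hc2 : n / d = l₂
    · rw [if_pos hc2]
      have hnn : n < d * m := lt_mul_of_div_eq hd hl₂ hc2
      have : l₁ * d + n % d < d * m := by
        have hexp : (l₁ + 1) * d = l₁ * d + d := by ring
        calc l₁ * d + n % d < (l₁ + 1) * d := by omega
        _ ≤ m * d := Nat.mul_le_mul_right d hl₁
        _ = d * m := Nat.mul_comm _ _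
      simp [this, hnn]
    · rw [if_neg hc2]

/-- the transposition of indices `l₁ l₂` on `ℕ`. -/
def swapIdx (l₁ l₂ j : ℕ) : ℕ := if j = l₁ then l₂ else if j = l₂ then l₁ else j

lemma nswap_idx {d l₁ l₂ n : ℕ} (hd : 0 < d) :
    (nswap d l₁ l₂ n) / d = swapIdx l₁ l₂ (n / d) := by
  have hmod : n % d < d := Nat.mod_lt _ hd
  unfold nswap swapIdx
  by_cases hc1 : n / d = l₁
  · rw [if_pos hc1, if_pos hc1, (key_div hd l₂ _ hmod).1]
  · rw [if_neg hc1, if_neg hc1]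
    by_cases hc2 : n / d = l₂
    · rw [if_pos hc2, if_pos hc2, (key_div hd l₁ _ hmod).1]
    · rw [if_neg hc2, if_neg hc2]

variable {Δ : Type*} [Fintype Δ] [DecidableEq Δ]

/-- the permutation of `Δ` induced by `nswap` through `e`. -/
def nsPerm {ω : ℕ} (e : Δ ≃ Fin ω) (d l₁ l₂ : ℕ) (hd : 0 < d)
    (h1 : (l₁ + 1) * d ≤ ω) (h2 : (l₂ + 1) * d ≤ ω) : Equiv.Perm Δ :=
  Function.Involutive.toPerm
    (fun a => e.symm ⟨nswap d l₁ l₂ (e a), nswap_lt hd h1 h2 (e a).isLt⟩)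
    (by
      intro a
      apply e.injective
      simp only [Equiv.apply_symm_apply]
      apply Fin.ext
      simp [nswap_invol hd])

lemma nsPerm_apply {ω : ℕ} (e : Δ ≃ Fin ω) (d l₁ l₂ : ℕ) (hd : 0 < d)
    (h1 : (l₁ + 1) * d ≤ ω) (h2 : (l₂ + 1) * d ≤ ω) (a : Δ) :
    ((e (nsPerm e d l₁ l₂ hd h1 h2 a) : Fin ω) : ℕ) = nswap d l₁ l₂ (e a) := by
  simp [nsPerm, Function.Involutive.toPerm]

/-- `σ` respects the block structure of width `d` with index permutation `π`. -/
def Good {ω : ℕ} (e : Δ ≃ Fin ω) (d m : ℕ) (π : ℕ → ℕ) (σ : Equiv.Perm Δ) : Prop :=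
  ∀ a : Δ, (((e (σ a) : Fin ω) : ℕ) < d * m ↔ ((e a : Fin ω) : ℕ) < d * m) ∧
    ((e (σ a) : Fin ω) : ℕ) / d = π (((e a : Fin ω) : ℕ) / d)

lemma good_trans {ω : ℕ} {e : Δ ≃ Fin ω} {d m : ℕ} {π π' : ℕ → ℕ}
    {σ σ' : Equiv.Perm Δ} (h : Good e d m π σ) (h' : Good e d m π' σ') :
    Good e d m (π' ∘ π) (σ.trans σ') := by
  intro a
  refine ⟨?_, ?_⟩
  · exact (h' (σ a)).1.trans (h a).1
  · simp only [Equiv.trans_apply, Function.comp_apply, (h' (σ a)).2, (h a).2]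

lemma good_swap {ω : ℕ} {e : Δ ≃ Fin ω} {d m : ℕ} {u v : Δ}
    (hu : ((e u : Fin ω) : ℕ) < d * m) (hv : ((e v : Fin ω) : ℕ) < d * m)
    (hj : ((e u : Fin ω) : ℕ) / d = ((e v : Fin ω) : ℕ) / d) :
    Good e d m id (Equiv.swap u v) := by
  intro a
  by_cases hau : a = u
  · subst hau
    rw [Equiv.swap_apply_left]
    exact ⟨by simp [hu, hv], hj.symm⟩
  · by_cases hav : a = v
    · subst hav
      rw [Equiv.swap_apply_right]
      exact ⟨by simp [hu, hv], hj⟩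
    · rw [Equiv.swap_apply_of_ne_of_ne hau hav]
      exact ⟨Iff.rfl, rfl⟩

lemma good_nsPerm {ω : ℕ} (e : Δ ≃ Fin ω) {d m l₁ l₂ : ℕ} (hd : 0 < d)
    (hl₁ : l₁ < m) (hl₂ : l₂ < m) (hdm : d * m ≤ ω) :
    Good e d m (swapIdx l₁ l₂)
      (nsPerm e d l₁ l₂ hd
        (le_trans (Nat.mul_le_mul_right d hl₁) (by rwa [Nat.mul_comm]))
        (le_trans (Nat.mul_le_mul_right d hl₂) (by rwa [Nat.mul_comm]))) := by
  intro a
  rw [nsPerm_apply]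
  exact ⟨nswap_thresh hd hl₁ hl₂, nswap_idx hd⟩

/-- the base block. -/
def B0 {ω : ℕ} (e : Δ ≃ Fin ω) (c m : ℕ) : Finset (Δ × Δ) :=
  Finset.univ.filter fun p =>
    ((e p.1 : Fin ω) : ℕ) < c * m ∧ ((e p.2 : Fin ω) : ℕ) < (c + 1) * m ∧
      ((e p.1 : Fin ω) : ℕ) / c = ((e p.2 : Fin ω) : ℕ) / (c + 1)

lemma mem_B0 {ω : ℕ} (e : Δ ≃ Fin ω) (c m : ℕ) (p : Δ × Δ) :
    p ∈ B0 e c m ↔ ((e p.1 : Fin ω) : ℕ) < c * m ∧ ((e p.2 : Fin ω) : ℕ) < (c + 1) * m ∧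
      ((e p.1 : Fin ω) : ℕ) / c = ((e p.2 : Fin ω) : ℕ) / (c + 1) := by
  simp [B0]

lemma card_B0 {ω : ℕ} (e : Δ ≃ Fin ω) {c m : ℕ} (hc : 0 < c)
    (hcm : c * m ≤ ω) (hcm1 : (c + 1) * m ≤ ω) :
    (B0 e c m).card = c * (c + 1) * m := by
  have hc1 : 0 < c + 1 := Nat.succ_pos c
  have key : ∀ (d l i : ℕ), 0 < d → l < m → i < d → d * m ≤ ω → i + l * d < ω := by
    intro d l i hd hl hi hdm
    calc i + l * d < d + l * d := by omega
    _ = (l + 1) * d := by ring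
    _ ≤ m * d := Nat.mul_le_mul_right d hl
    _ = d * m := Nat.mul_comm _ _
    _ ≤ ω := hdm
  rw [show c * (c + 1) * m = Fintype.card (Fin m × Fin c × Fin (c + 1)) by
    simp [Fintype.card_prod]; ring]
  rw [← Finset.card_univ]
  apply Finset.card_bij'
    (i := fun p hp => ((⟨((e p.1 : Fin ω) : ℕ) / c, by
        rw [mem_B0] at hp
        exact div_lt_of_lt_mul' hc hp.1⟩,
      ⟨((e p.1 : Fin ω) : ℕ) % c, Nat.mod_lt _ hc⟩,
      ⟨((e p.2 : Fin ω) : ℕ) % (c + 1), Nat.mod_lt _ hc1⟩) : Fin m × Fin c × Fin (c+1)))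
    (j := fun t ht => (e.symm ⟨(t.2.1 : ℕ) + (t.1 : ℕ) * c,
        key c t.1 t.2.1 hc t.1.isLt t.2.1.isLt hcm⟩,
      e.symm ⟨(t.2.2 : ℕ) + (t.1 : ℕ) * (c + 1),
        key (c+1) t.1 t.2.2 hc1 t.1.isLt t.2.2.isLt hcm1⟩))
  case hi => intro p hp; exact Finset.mem_univ _
  case hj =>
    intro t ht
    rw [mem_B0]
    simp only [Equiv.apply_symm_apply]
    have h1 := key_div hc (t.1 : ℕ) (t.2.1 : ℕ) t.2.1.isLt
    have h2 := key_div hc1 (t.1 : ℕ) (t.2.2 : ℕ) t.2.2.isLt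
    rw [Nat.add_comm] at h1 h2
    refine ⟨?_, ?_, ?_⟩
    · exact lt_mul_of_div_eq hc t.1.isLt h1.1
    · exact lt_mul_of_div_eq hc1 t.1.isLt h2.1
    · rw [h1.1, h2.1]
  case left_inv =>
    intro p hp
    obtain ⟨hm1, hm2, hm3⟩ := (mem_B0 e c m p).mp hp
    have h1 : ((e p.1 : Fin ω) : ℕ) % c + ((e p.1 : Fin ω) : ℕ) / c * c = (e p.1 : Fin ω) :=
      Nat.mod_add_div' _ _
    have h2 : ((e p.2 : Fin ω) : ℕ) % (c+1) + ((e p.1 : Fin ω) : ℕ) / c * (c+1) =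
        (e p.2 : Fin ω) := by
      rw [hm3]; exact Nat.mod_add_div' _ _
    have e1 : (⟨((e p.1 : Fin ω) : ℕ) % c + ((e p.1 : Fin ω) : ℕ) / c * c, by omega⟩ : Fin ω)
        = e p.1 := Fin.ext h1
    refine Prod.ext ?_ ?_
    · show (e.symm ⟨_, _⟩ : Δ) = p.1
      apply e.injective
      rw [Equiv.apply_symm_apply]
      exact Fin.ext h1
    · show (e.symm ⟨_, _⟩ : Δ) = p.2
      apply e.injective
      rw [Equiv.apply_symm_apply]
      exact Fin.ext h2
  case right_inv =>
    intro t ht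
    have h1 := key_div hc (t.1 : ℕ) (t.2.1 : ℕ) t.2.1.isLt
    have h2 := key_div hc1 (t.1 : ℕ) (t.2.2 : ℕ) t.2.2.isLt
    rw [Nat.add_comm] at h1 h2
    ext
    · simp only [Equiv.apply_symm_apply]
      exact h1.1
    · simp only [Equiv.apply_symm_apply]
      exact h1.2
    · simp only [Equiv.apply_symm_apply]
      exact h2.2

lemma exists_stab {ω : ℕ} (e : Δ ≃ Fin ω) {c m : ℕ} (hc : 0 < c)
    (hcm : c * m ≤ ω) (hcm1 : (c + 1) * m ≤ ω) {p q : Δ × Δ}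
    (hp : p ∈ B0 e c m) (hq : q ∈ B0 e c m) :
    ∃ σ τ : Equiv.Perm Δ, σ p.1 = q.1 ∧ τ p.2 = q.2 ∧
      (B0 e c m).image (Equiv.prodCongr σ τ) = B0 e c m := by
  have hc1 : 0 < c + 1 := Nat.succ_pos c
  obtain ⟨hp1, hp2, hp3⟩ := (mem_B0 e c m p).mp hp
  obtain ⟨hq1, hq2, hq3⟩ := (mem_B0 e c m q).mp hq
  set l₁ := ((e p.1 : Fin ω) : ℕ) / c with hl₁def
  set l₂ := ((e q.1 : Fin ω) : ℕ) / c with hl₂def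
  have hl₁ : l₁ < m := div_lt_of_lt_mul' hc hp1
  have hl₂ : l₂ < m := div_lt_of_lt_mul' hc hq1
  -- the X-side permutation
  have goodS := good_nsPerm e hc hl₁ hl₂ hcm
  set S := nsPerm e c l₁ l₂ hc _ _ with hSdef
  have hSu1 : ((e (S p.1) : Fin ω) : ℕ) < c * m := (goodS p.1).1.mpr hp1
  have hSuidx : ((e (S p.1) : Fin ω) : ℕ) / c = l₂ := by
    rw [(goodS p.1).2, ← hl₁def, swapIdx, if_pos rfl]
  have goodswapS : Good e c m id (Equiv.swap (S p.1) q.1) :=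
    good_swap hSu1 hq1 (by rw [hSuidx, hl₂def])
  have goodσ : Good e c m (swapIdx l₁ l₂) (S.trans (Equiv.swap (S p.1) q.1)) := by
    have := good_trans goodS goodswapS
    simpa using this
  set σ := S.trans (Equiv.swap (S p.1) q.1) with hσdef
  have hσp : σ p.1 = q.1 := by
    simp [hσdef, Equiv.swap_apply_left]
  -- the Y-side permutation
  have hp3' : ((e p.2 : Fin ω) : ℕ) / (c + 1) = l₁ := hp3.symm
  have hq3' : ((e q.2 : Fin ω) : ℕ) / (c + 1) = l₂ := hq3.symm
  have goodT := good_nsPerm e hc1 hl₁ hl₂ hcm1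
  set T := nsPerm e (c+1) l₁ l₂ hc1 _ _ with hTdef
  have hTu1 : ((e (T p.2) : Fin ω) : ℕ) < (c+1) * m := (goodT p.2).1.mpr hp2
  have hTuidx : ((e (T p.2) : Fin ω) : ℕ) / (c+1) = l₂ := by
    rw [(goodT p.2).2, hp3', swapIdx, if_pos rfl]
  have goodswapT : Good e (c+1) m id (Equiv.swap (T p.2) q.2) :=
    good_swap hTu1 hq2 (by rw [hTuidx, hq3'])
  have goodτ : Good e (c+1) m (swapIdx l₁ l₂) (T.trans (Equiv.swap (T p.2) q.2)) := by
    have := good_trans goodT goodswapT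
    simpa using this
  set τ := T.trans (Equiv.swap (T p.2) q.2) with hτdef
  have hτp : τ p.2 = q.2 := by
    simp [hτdef, Equiv.swap_apply_left]
  refine ⟨σ, τ, hσp, hτp, ?_⟩
  -- the image is the block itself
  have hsub : (B0 e c m).image (Equiv.prodCongr σ τ) ⊆ B0 e c m := by
    intro x hx
    rw [Finset.mem_image] at hx
    obtain ⟨y, hy, rfl⟩ := hx
    obtain ⟨hy1, hy2, hy3⟩ := (mem_B0 e c m y).mp hy
    rw [mem_B0]
    refine ⟨(goodσ y.1).1.mpr hy1, (goodτ y.2).1.mpr hy2, ?_⟩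
    show ((e (σ y.1) : Fin ω) : ℕ) / c = ((e (τ y.2) : Fin ω) : ℕ) / (c+1)
    rw [(goodσ y.1).2, (goodτ y.2).2, hy3]
  have hcard : ((B0 e c m).image (Equiv.prodCongr σ τ)).card = (B0 e c m).card :=
    Finset.card_image_of_injective _ (Equiv.injective _)
  exact Finset.eq_of_subset_of_card_le hsub (le_of_eq hcard.symm)

/-- reduce a count over a product type to an iterated count. -/
lemma card_filter_pair {α β : Type*} [Fintype α] [Fintype β]
    (Q : α × β → Prop) [DecidablePred Q] :
    (Finset.univ.filter Q).card = ∑ a : α, (Finset.univ.filter fun b => Q (a, b)).card := by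
  simp only [Finset.card_filter]
  rw [Fintype.sum_prod_type]

/-- exchange a double count. -/
lemma sum_card_comm {α β : Type*} (s : Finset α) (t : Finset β)
    (R : α → β → Prop) [∀ a b, Decidable (R a b)] :
    ∑ a ∈ s, (t.filter fun b => R a b).card = ∑ b ∈ t, (s.filter fun a => R a b).card := by
  simp only [Finset.card_filter]
  exact Finset.sum_comm

/-- counting pairs with independent coordinate conditions. -/
lemma card_filter_indep {α β : Type*} [Fintype α] [Fintype β] [DecidableEq α] [DecidableEq β]
    (P : α → Prop) (Q : β → Prop) [DecidablePred P] [DecidablePred Q] :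
    (Finset.univ.filter fun p : α × β => P p.1 ∧ Q p.2).card =
      (Finset.univ.filter P).card * (Finset.univ.filter Q).card := by
  rw [card_filter_pair]
  have : ∀ a : α, (Finset.univ.filter fun b : β => P a ∧ Q b).card =
      if P a then (Finset.univ.filter Q).card else 0 := by
    intro a
    by_cases h : P a
    · rw [if_pos h]
      congr 1
      apply Finset.filter_congr
      intro b _
      simp [h]
    · rw [if_neg h]
      rw [Finset.card_eq_zero]
      apply Finset.filter_false_of_mem
      intro b _
      simp [h]
  rw [Finset.sum_congr rfl fun a _ => this a]
  rw [← Finset.sum_filter]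
  rw [Finset.sum_const, smul_eq_mul, Nat.mul_comm]

lemma card_filter_eq_self (a : Δ) : (Finset.univ.filter fun b : Δ => a = b).card = 1 := by
  have : (Finset.univ.filter fun b : Δ => a = b) = {a} := by
    ext b; simp [eq_comm]
  rw [this, Finset.card_singleton]

lemma card_filter_ne_self (a : Δ) :
    (Finset.univ.filter fun b : Δ => ¬ (a = b)).card = Fintype.card Δ - 1 := by
  have : (Finset.univ.filter fun b : Δ => ¬ (a = b)) = Finset.univ.erase a := by
    ext b; simp [eq_comm, ne_comm]
  rw [this, Finset.card_erase_of_mem (Finset.mem_univ _), Finset.card_univ]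

/-- cardinality of a slice. -/
lemma card_slice {ω : ℕ} (e : Δ ≃ Fin ω) {d l : ℕ} (hd : 0 < d) (hb : (l + 1) * d ≤ ω) :
    (Finset.univ.filter fun b : Δ => ((e b : Fin ω) : ℕ) / d = l).card = d := by
  have main : (Finset.univ.filter fun b : Δ => ((e b : Fin ω) : ℕ) / d = l).card
      = (Finset.univ : Finset (Fin d)).card := by
    apply Finset.card_bij'
      (i := fun b hb => (⟨((e b : Fin ω) : ℕ) % d, Nat.mod_lt _ hd⟩ : Fin d))
      (j := fun x hx => e.symm ⟨(x : ℕ) + l * d, by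
        calc (x : ℕ) + l * d < d + l * d := by omega
        _ = (l + 1) * d := by ring
        _ ≤ ω := hb⟩)
    case hi => intro b _; exact Finset.mem_univ _
    case hj =>
      intro x hx
      rw [Finset.mem_filter]
      refine ⟨Finset.mem_univ _, ?_⟩
      simp only [Equiv.apply_symm_apply]
      have := key_div hd l (x : ℕ) x.isLt
      rw [Nat.add_comm] at this
      exact this.1
    case left_inv =>
      intro b hbm
      rw [Finset.mem_filter] at hbm
      apply e.injective
      rw [Equiv.apply_symm_apply]
      apply Fin.ext
      show ((e b : Fin ω) : ℕ) % d + l * d = ((e b : Fin ω) : ℕ)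
      rw [← hbm.2, Nat.mod_add_div']
    case right_inv =>
      intro x hx
      apply Fin.ext
      show ((e (e.symm ⟨(x : ℕ) + l * d, _⟩) : Fin ω) : ℕ) % d = (x : ℕ)
      rw [Equiv.apply_symm_apply]
      have := key_div hd l (x : ℕ) x.isLt
      rw [Nat.add_comm] at this
      exact this.2
  rw [main, Finset.card_univ, Fintype.card_fin]

lemma m_ge_two {c m ω : ℕ} (hc : 0 < c) (hm : 0 < m) (hω : 5 ≤ ω)
    (heq : 2 * c * (c + 1) * m = (2 * c - 1) * (ω + 1) + 2) : 2 ≤ m := by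
  by_contra h
  have hm1 : m = 1 := by omega
  subst hm1
  zify [show 1 ≤ 2*c by omega] at heq
  have key : (2*(c:ℤ)-1)*((ω:ℤ) - c) = (c:ℤ) - 1 := by linear_combination -heq
  have hc1 : (1:ℤ) ≤ (c:ℤ) := by exact_mod_cast hc
  have hω5 : (5:ℤ) ≤ (ω:ℤ) := by exact_mod_cast hω
  by_cases hc2 : (2:ℤ) ≤ (c:ℤ)
  · by_cases hwc : (c:ℤ) + 1 ≤ (ω:ℤ)
    · nlinarith [key]
    · nlinarith [key]
  · have : (c:ℤ) = 1 := by omega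
    rw [this] at key
    nlinarith [key]

lemma bound_cm {c m ω : ℕ} (hc : 0 < c) (hm2 : 2 ≤ m)
    (heq : 2 * c * (c + 1) * m = (2 * c - 1) * (ω + 1) + 2) : (c + 1) * m ≤ ω := by
  by_contra h
  push_neg at h
  zify [show 1 ≤ 2*c by omega] at heq
  have h' : (ω:ℤ) + 1 ≤ ((c:ℤ)+1) * m := by exact_mod_cast h
  have hc1 : (1:ℤ) ≤ (c:ℤ) := by exact_mod_cast hc
  have hm2' : (2:ℤ) ≤ (m:ℤ) := by exact_mod_cast hm2
  nlinarith [heq, h', mul_le_mul_of_nonneg_left h' (by linarith : (0:ℤ) ≤ 2*(c:ℤ)-1)]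

lemma exists_perm_two {a b a' b' : Δ} (hab : a ≠ b) (hab' : a' ≠ b') :
    ∃ σ : Equiv.Perm Δ, σ a = a' ∧ σ b = b' := by
  refine ⟨(Equiv.swap a a').trans (Equiv.swap (Equiv.swap a a' b) b'), ?_, ?_⟩
  · rw [Equiv.trans_apply, Equiv.swap_apply_left]
    apply Equiv.swap_apply_of_ne_of_ne
    · intro hcon
      have h2 : (Equiv.swap a a') a = (Equiv.swap a a') b := by
        rw [Equiv.swap_apply_left]; exact hcon
      exact hab ((Equiv.swap a a').injective h2)
    · exact hab'
  · rw [Equiv.trans_apply, Equiv.swap_apply_left]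

/-- the wreath-product form of a permutation of `Δ × Δ`. -/
def WrForm (g : Equiv.Perm (Δ × Δ)) : Prop :=
  ∃ σ τ : Equiv.Perm Δ,
    (∀ p : Δ × Δ, g p = (σ p.1, τ p.2)) ∨ (∀ p : Δ × Δ, g p = (σ p.2, τ p.1))

lemma wrForm_untw (σ τ : Equiv.Perm Δ) : WrForm (Equiv.prodCongr σ τ) :=
  ⟨σ, τ, Or.inl fun _ => rfl⟩

lemma wrForm_twst (σ τ : Equiv.Perm Δ) :
    WrForm ((Equiv.prodComm Δ Δ).trans (Equiv.prodCongr σ τ)) :=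
  ⟨σ, τ, Or.inr fun _ => rfl⟩

lemma trans_t2 {p q p' q' : Δ × Δ} (h1 : p.1 ≠ q.1) (h2 : p.2 ≠ q.2)
    (h1' : p'.1 ≠ q'.1) (h2' : p'.2 ≠ q'.2) :
    ∃ g : Equiv.Perm (Δ × Δ), WrForm g ∧ g p = p' ∧ g q = q' := by
  obtain ⟨σ, hσ1, hσ2⟩ := exists_perm_two h1 h1'
  obtain ⟨τ, hτ1, hτ2⟩ := exists_perm_two h2 h2'
  exact ⟨Equiv.prodCongr σ τ, wrForm_untw σ τ,
    Prod.ext hσ1 hτ1, Prod.ext hσ2 hτ2⟩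

lemma trans_t1 {p q p' q' : Δ × Δ} (hpq : p ≠ q) (ht : p.1 = q.1 ∨ p.2 = q.2)
    (hpq' : p' ≠ q') (ht' : p'.1 = q'.1 ∨ p'.2 = q'.2) :
    ∃ g : Equiv.Perm (Δ × Δ), WrForm g ∧ g p = p' ∧ g q = q' := by
  rcases ht with hA | hB
  · have h2 : p.2 ≠ q.2 := fun h => hpq (Prod.ext hA h)
    rcases ht' with hA' | hB'
    · -- row to row
      have h2' : p'.2 ≠ q'.2 := fun h => hpq' (Prod.ext hA' h)
      obtain ⟨τ, hτ1, hτ2⟩ := exists_perm_two h2 h2'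
      refine ⟨Equiv.prodCongr (Equiv.swap p.1 p'.1) τ, wrForm_untw _ _,
        Prod.ext (Equiv.swap_apply_left _ _) hτ1, Prod.ext ?_ hτ2⟩
      show (Equiv.swap p.1 p'.1) q.1 = q'.1
      rw [← hA, Equiv.swap_apply_left, hA']
    · -- row to column
      have h1' : p'.1 ≠ q'.1 := fun h => hpq' (Prod.ext h hB')
      obtain ⟨σ, hσ1, hσ2⟩ := exists_perm_two h2 h1'
      refine ⟨(Equiv.prodComm Δ Δ).trans (Equiv.prodCongr σ (Equiv.swap p.1 p'.2)),
        wrForm_twst _ _, Prod.ext hσ1 (Equiv.swap_apply_left _ _), Prod.ext hσ2 ?_⟩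
      show (Equiv.swap p.1 p'.2) q.1 = q'.2
      rw [← hA, Equiv.swap_apply_left, hB']
  · have h1 : p.1 ≠ q.1 := fun h => hpq (Prod.ext h hB)
    rcases ht' with hA' | hB'
    · -- column to row
      have h2' : p'.2 ≠ q'.2 := fun h => hpq' (Prod.ext hA' h)
      obtain ⟨τ, hτ1, hτ2⟩ := exists_perm_two h1 h2'
      refine ⟨(Equiv.prodComm Δ Δ).trans (Equiv.prodCongr (Equiv.swap p.2 p'.1) τ),
        wrForm_twst _ _, Prod.ext (Equiv.swap_apply_left _ _) hτ1, Prod.ext ?_ hτ2⟩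
      show (Equiv.swap p.2 p'.1) q.2 = q'.1
      rw [← hB, Equiv.swap_apply_left, hA']
    · -- column to column
      have h1' : p'.1 ≠ q'.1 := fun h => hpq' (Prod.ext h hB')
      obtain ⟨σ, hσ1, hσ2⟩ := exists_perm_two h1 h1'
      refine ⟨Equiv.prodCongr σ (Equiv.swap p.2 p'.2), wrForm_untw _ _,
        Prod.ext hσ1 (Equiv.swap_apply_left _ _), Prod.ext hσ2 ?_⟩
      show (Equiv.swap p.2 p'.2) q.2 = q'.2
      rw [← hB, Equiv.swap_apply_left, hB']

lemma wr_t1 {g : Equiv.Perm (Δ × Δ)} (hw : WrForm g) {p q : Δ × Δ}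
    (h : p ≠ q ∧ (p.1 = q.1 ∨ p.2 = q.2)) :
    g p ≠ g q ∧ ((g p).1 = (g q).1 ∨ (g p).2 = (g q).2) := by
  obtain ⟨σ, τ, hform | hform⟩ := hw
  · refine ⟨fun hcon => h.1 (g.injective hcon), ?_⟩
    rw [hform p, hform q]
    rcases h.2 with h2 | h2
    · exact Or.inl (by simp [h2])
    · exact Or.inr (by simp [h2])
  · refine ⟨fun hcon => h.1 (g.injective hcon), ?_⟩
    rw [hform p, hform q]
    rcases h.2 with h2 | h2
    · exact Or.inr (by simp [h2])
    · exact Or.inl (by simp [h2])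

lemma wr_t2 {g : Equiv.Perm (Δ × Δ)} (hw : WrForm g) {p q : Δ × Δ}
    (h : p.1 ≠ q.1 ∧ p.2 ≠ q.2) :
    (g p).1 ≠ (g q).1 ∧ (g p).2 ≠ (g q).2 := by
  obtain ⟨σ, τ, hform | hform⟩ := hw
  · rw [hform p, hform q]
    exact ⟨fun hcon => h.1 (σ.injective hcon), fun hcon => h.2 (τ.injective hcon)⟩
  · rw [hform p, hform q]
    exact ⟨fun hcon => h.2 (σ.injective hcon), fun hcon => h.1 (τ.injective hcon)⟩

lemma card_filter_or_split {α : Type*} [DecidableEq α] (s : Finset α) (a b : α → Prop)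
    [DecidablePred a] [DecidablePred b] (hdisj : ∀ x, ¬(a x ∧ b x)) :
    (s.filter fun x => a x ∨ b x).card = (s.filter a).card + (s.filter b).card := by
  rw [Finset.filter_or, Finset.card_union_of_disjoint]
  rw [Finset.disjoint_left]
  intro x hx1 hx2
  rw [Finset.mem_filter] at hx1 hx2
  exact hdisj x ⟨hx1.2, hx2.2⟩

lemma sum_ite_mem_card {α : Type*} [Fintype α] [DecidableEq α] (s : Finset α) (K : ℕ) :
    (∑ p : α, if p ∈ s then K else 0) = s.card * K := by
  rw [← Finset.sum_filter, Finset.filter_univ_mem, Finset.sum_const, smul_eq_mul]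

lemma slice_erase {ω : ℕ} (e : Δ ≃ Fin ω) {d l : ℕ} (hd : 0 < d) (hb : (l + 1) * d ≤ ω)
    (b₀ : Δ) (hb₀ : ((e b₀ : Fin ω) : ℕ) / d = l) :
    (Finset.univ.filter fun b : Δ => ((e b : Fin ω) : ℕ) / d = l ∧ ¬(b₀ = b)).card = d - 1 := by
  have hset : (Finset.univ.filter fun b : Δ => ((e b : Fin ω) : ℕ) / d = l ∧ ¬(b₀ = b))
      = (Finset.univ.filter fun b : Δ => ((e b : Fin ω) : ℕ) / d = l).erase b₀ := by
    ext b
    simp only [Finset.mem_filter, Finset.mem_erase, Finset.mem_univ, true_and, ne_eq]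
    constructor
    · rintro ⟨h1, h2⟩; exact ⟨fun h => h2 h.symm, h1⟩
    · rintro ⟨h1, h2⟩; exact ⟨h2, fun h => h1 h.symm⟩
  rw [hset, Finset.card_erase_of_mem, card_slice e hd hb]
  rw [Finset.mem_filter]
  exact ⟨Finset.mem_univ _, hb₀⟩

section BlockCounts

variable {ω : ℕ} (e : Δ ≃ Fin ω) {c m : ℕ}

lemma row_count (hc : 0 < c) (hcm : c * m ≤ ω) (hcm1 : (c + 1) * m ≤ ω)
    {p : Δ × Δ} (hp : p ∈ B0 e c m) :
    (Finset.univ.filter fun q : Δ × Δ =>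
      (p.1 = q.1 ∧ ¬(p.2 = q.2)) ∧ q ∈ B0 e c m).card = c := by
  have hc1 : 0 < c + 1 := Nat.succ_pos c
  obtain ⟨hp1, hp2, hp3⟩ := (mem_B0 e c m p).mp hp
  set l := ((e p.1 : Fin ω) : ℕ) / c with hldef
  have hl : l < m := div_lt_of_lt_mul' hc hp1
  have hbound : (l + 1) * (c + 1) ≤ ω := by
    calc (l + 1) * (c + 1) ≤ m * (c + 1) := Nat.mul_le_mul_right _ hl
    _ = (c + 1) * m := Nat.mul_comm _ _
    _ ≤ ω := hcm1
  have hset : (Finset.univ.filter fun q : Δ × Δ =>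
      (p.1 = q.1 ∧ ¬(p.2 = q.2)) ∧ q ∈ B0 e c m)
      = Finset.univ.filter fun q : Δ × Δ =>
        p.1 = q.1 ∧ (((e q.2 : Fin ω) : ℕ) / (c + 1) = l ∧ ¬(p.2 = q.2)) := by
    apply Finset.filter_congr
    intro q _
    rw [mem_B0]
    constructor
    · rintro ⟨⟨h1, h2⟩, _, _, h5⟩
      refine ⟨h1, ?_, h2⟩
      rw [← h5, ← h1]
    · rintro ⟨h1, h2, h3⟩
      refine ⟨⟨h1, h3⟩, by rw [← h1]; exact hp1, lt_mul_of_div_eq hc1 hl h2, ?_⟩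
      rw [h2, ← h1]
  rw [hset, card_filter_indep (fun x => p.1 = x)
      (fun y => ((e y : Fin ω) : ℕ) / (c + 1) = l ∧ ¬(p.2 = y)),
    card_filter_eq_self, slice_erase e hc1 hbound p.2 (by rw [← hp3]), one_mul]
  omega

lemma col_count (hc : 0 < c) (hcm : c * m ≤ ω) (hcm1 : (c + 1) * m ≤ ω)
    {p : Δ × Δ} (hp : p ∈ B0 e c m) :
    (Finset.univ.filter fun q : Δ × Δ =>
      (¬(p.1 = q.1) ∧ p.2 = q.2) ∧ q ∈ B0 e c m).card = c - 1 := by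
  have hc1 : 0 < c + 1 := Nat.succ_pos c
  obtain ⟨hp1, hp2, hp3⟩ := (mem_B0 e c m p).mp hp
  set l := ((e p.1 : Fin ω) : ℕ) / c with hldef
  have hl : l < m := div_lt_of_lt_mul' hc hp1
  have hbound : (l + 1) * c ≤ ω := by
    calc (l + 1) * c ≤ m * c := Nat.mul_le_mul_right _ hl
    _ = c * m := Nat.mul_comm _ _
    _ ≤ ω := hcm
  have hset : (Finset.univ.filter fun q : Δ × Δ =>
      (¬(p.1 = q.1) ∧ p.2 = q.2) ∧ q ∈ B0 e c m)
      = Finset.univ.filter fun q : Δ × Δ =>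
        (((e q.1 : Fin ω) : ℕ) / c = l ∧ ¬(p.1 = q.1)) ∧ p.2 = q.2 := by
    apply Finset.filter_congr
    intro q _
    rw [mem_B0]
    constructor
    · rintro ⟨⟨h1, h2⟩, _, _, h5⟩
      refine ⟨⟨?_, h1⟩, h2⟩
      rw [h5, ← h2, ← hp3]
    · rintro ⟨⟨h1, h2⟩, h3⟩
      refine ⟨⟨h2, h3⟩, lt_mul_of_div_eq hc hl h1, by rw [← h3]; exact hp2, ?_⟩
      rw [h1, ← h3, ← hp3]
  rw [hset, card_filter_indep (fun x => ((e x : Fin ω) : ℕ) / c = l ∧ ¬(p.1 = x))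
      (fun y => p.2 = y),
    card_filter_eq_self, slice_erase e hc hbound p.1 rfl, mul_one]

lemma diag_count {p : Δ × Δ} (hp : p ∈ B0 e c m) :
    (Finset.univ.filter fun q : Δ × Δ =>
      (p.1 = q.1 ∧ p.2 = q.2) ∧ q ∈ B0 e c m).card = 1 := by
  have hset : (Finset.univ.filter fun q : Δ × Δ =>
      (p.1 = q.1 ∧ p.2 = q.2) ∧ q ∈ B0 e c m) = {p} := by
    ext q
    simp only [Finset.mem_filter, Finset.mem_univ, true_and, Finset.mem_singleton]
    constructor
    · rintro ⟨⟨h1, h2⟩, _⟩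
      exact (Prod.ext h1 h2).symm
    · rintro rfl
      exact ⟨⟨rfl, rfl⟩, hp⟩
  rw [hset, Finset.card_singleton]

end BlockCounts

section Stats

variable {ω : ℕ} (e : Δ ≃ Fin ω) {c m : ℕ}

lemma perpoint_T1 (p : Δ × Δ) :
    (Finset.univ.filter fun q : Δ × Δ => p ≠ q ∧ (p.1 = q.1 ∨ p.2 = q.2)).card
      = (Fintype.card Δ - 1) + (Fintype.card Δ - 1) := by
  have hset : (Finset.univ.filter fun q : Δ × Δ => p ≠ q ∧ (p.1 = q.1 ∨ p.2 = q.2))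
      = Finset.univ.filter fun q : Δ × Δ =>
        (p.1 = q.1 ∧ ¬(p.2 = q.2)) ∨ (¬(p.1 = q.1) ∧ p.2 = q.2) := by
    apply Finset.filter_congr
    intro q _
    simp only [ne_eq, Prod.ext_iff, not_and]
    tauto
  rw [hset, card_filter_or_split]
  · rw [card_filter_indep (fun x => p.1 = x) (fun y => ¬(p.2 = y)),
      card_filter_indep (fun x => ¬(p.1 = x)) (fun y => p.2 = y),
      card_filter_eq_self, card_filter_ne_self, card_filter_eq_self, card_filter_ne_self,
      one_mul, mul_one]
  · intro x hx
    tauto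

lemma perpoint_T2 (p : Δ × Δ) :
    (Finset.univ.filter fun q : Δ × Δ => ¬(p.1 = q.1) ∧ ¬(p.2 = q.2)).card
      = (Fintype.card Δ - 1) * (Fintype.card Δ - 1) := by
  rw [card_filter_indep (fun x => ¬(p.1 = x)) (fun y => ¬(p.2 = y)),
    card_filter_ne_self, card_filter_ne_self]

lemma statT1 :
    (Finset.univ.filter fun t : (Δ × Δ) × (Δ × Δ) =>
      t.1 ≠ t.2 ∧ (t.1.1 = t.2.1 ∨ t.1.2 = t.2.2)).card
      = (Fintype.card Δ * Fintype.card Δ) *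
        ((Fintype.card Δ - 1) + (Fintype.card Δ - 1)) := by
  rw [card_filter_pair]
  rw [Finset.sum_congr rfl fun p _ => perpoint_T1 p]
  rw [Finset.sum_const, Finset.card_univ, smul_eq_mul, Fintype.card_prod]

lemma statT2 :
    (Finset.univ.filter fun t : (Δ × Δ) × (Δ × Δ) =>
      ¬(t.1.1 = t.2.1) ∧ ¬(t.1.2 = t.2.2)).card
      = (Fintype.card Δ * Fintype.card Δ) *
        ((Fintype.card Δ - 1) * (Fintype.card Δ - 1)) := by
  rw [card_filter_pair]
  rw [Finset.sum_congr rfl fun p _ => perpoint_T2 p]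
  rw [Finset.sum_const, Finset.card_univ, smul_eq_mul, Fintype.card_prod]

lemma perpoint_blk1 (hc : 0 < c) (hcm : c * m ≤ ω) (hcm1 : (c + 1) * m ≤ ω)
    {p : Δ × Δ} (hp : p ∈ B0 e c m) :
    (Finset.univ.filter fun q : Δ × Δ =>
      (p ≠ q ∧ (p.1 = q.1 ∨ p.2 = q.2)) ∧ p ∈ B0 e c m ∧ q ∈ B0 e c m).card
      = c + (c - 1) := by
  have hset : (Finset.univ.filter fun q : Δ × Δ =>
      (p ≠ q ∧ (p.1 = q.1 ∨ p.2 = q.2)) ∧ p ∈ B0 e c m ∧ q ∈ B0 e c m)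
      = Finset.univ.filter fun q : Δ × Δ =>
        ((p.1 = q.1 ∧ ¬(p.2 = q.2)) ∧ q ∈ B0 e c m) ∨
        ((¬(p.1 = q.1) ∧ p.2 = q.2) ∧ q ∈ B0 e c m) := by
    apply Finset.filter_congr
    intro q _
    simp only [ne_eq, Prod.ext_iff, not_and]
    constructor
    · rintro ⟨⟨h1, h2⟩, _, h3⟩
      tauto
    · intro h
      constructor
      · constructor
        · tauto
        · tauto
      · refine ⟨hp, ?_⟩
        tauto
  rw [hset, card_filter_or_split]
  · rw [row_count e hc hcm hcm1 hp, col_count e hc hcm hcm1 hp]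
  · intro x hx
    tauto

lemma perpoint_blk2 (hc : 0 < c) (hm : 0 < m) (hcm : c * m ≤ ω) (hcm1 : (c + 1) * m ≤ ω)
    {p : Δ × Δ} (hp : p ∈ B0 e c m) :
    (Finset.univ.filter fun q : Δ × Δ =>
      (¬(p.1 = q.1) ∧ ¬(p.2 = q.2)) ∧ p ∈ B0 e c m ∧ q ∈ B0 e c m).card
      = c * (c + 1) * m - 2 * c := by
  -- partition the block according to the relation of q to p
  have hfull : (Finset.univ.filter fun q : Δ × Δ => q ∈ B0 e c m).card = c * (c + 1) * m := by
    rw [Finset.filter_univ_mem, card_B0 e hc hcm hcm1]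
  have hsplit1 := Finset.card_filter_add_card_filter_not
    (s := Finset.univ.filter fun q : Δ × Δ => q ∈ B0 e c m)
    (p := fun q : Δ × Δ => ¬(p.1 = q.1) ∧ ¬(p.2 = q.2))
  rw [Finset.filter_filter, Finset.filter_filter] at hsplit1
  have ha : ((Finset.univ.filter fun q : Δ × Δ =>
      q ∈ B0 e c m ∧ ¬(p.1 = q.1) ∧ ¬(p.2 = q.2))).card
      = (Finset.univ.filter fun q : Δ × Δ =>
        (¬(p.1 = q.1) ∧ ¬(p.2 = q.2)) ∧ p ∈ B0 e c m ∧ q ∈ B0 e c m).card := by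
    congr 1
    apply Finset.filter_congr
    intro q _
    constructor
    · rintro ⟨h1, h2⟩; exact ⟨h2, hp, h1⟩
    · rintro ⟨h1, _, h2⟩; exact ⟨h2, h1⟩
  have hb : ((Finset.univ.filter fun q : Δ × Δ =>
      q ∈ B0 e c m ∧ ¬(¬(p.1 = q.1) ∧ ¬(p.2 = q.2)))).card = (1 + c) + (c - 1) := by
    have hset2 : (Finset.univ.filter fun q : Δ × Δ =>
        q ∈ B0 e c m ∧ ¬(¬(p.1 = q.1) ∧ ¬(p.2 = q.2)))
        = Finset.univ.filter fun q : Δ × Δ =>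
          (((p.1 = q.1 ∧ p.2 = q.2) ∧ q ∈ B0 e c m) ∨
            ((p.1 = q.1 ∧ ¬(p.2 = q.2)) ∧ q ∈ B0 e c m)) ∨
          ((¬(p.1 = q.1) ∧ p.2 = q.2) ∧ q ∈ B0 e c m) := by
      apply Finset.filter_congr
      intro q _
      tauto
    rw [hset2, card_filter_or_split]
    · rw [card_filter_or_split]
      · rw [diag_count e hp, row_count e hc hcm hcm1 hp, col_count e hc hcm hcm1 hp]
      · intro x; tauto
    · intro x; tauto
  rw [ha] at hsplit1
  rw [hb, hfull] at hsplit1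
  have h1 : c * (c + 1) * 1 ≤ c * (c + 1) * m := Nat.mul_le_mul_left _ hm
  have h2 : c * 2 ≤ c * (c + 1) := Nat.mul_le_mul_left c (by omega)
  omega

lemma stat_blk1 (hc : 0 < c) (hcm : c * m ≤ ω) (hcm1 : (c + 1) * m ≤ ω) :
    (Finset.univ.filter fun t : (Δ × Δ) × (Δ × Δ) =>
      (t.1 ≠ t.2 ∧ (t.1.1 = t.2.1 ∨ t.1.2 = t.2.2)) ∧
        t.1 ∈ B0 e c m ∧ t.2 ∈ B0 e c m).card
      = (c * (c + 1) * m) * (c + (c - 1)) := by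
  rw [card_filter_pair]
  have hterm : ∀ p : Δ × Δ, (Finset.univ.filter fun q : Δ × Δ =>
      (p ≠ q ∧ (p.1 = q.1 ∨ p.2 = q.2)) ∧ p ∈ B0 e c m ∧ q ∈ B0 e c m).card
      = if p ∈ B0 e c m then c + (c - 1) else 0 := by
    intro p
    by_cases hp : p ∈ B0 e c m
    · rw [if_pos hp, perpoint_blk1 e hc hcm hcm1 hp]
    · rw [if_neg hp, Finset.card_eq_zero]
      apply Finset.filter_false_of_mem
      intro q _
      rintro ⟨_, hpB, _⟩
      exact hp hpB
  rw [Finset.sum_congr rfl fun p _ => hterm p, sum_ite_mem_card,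
    card_B0 e hc hcm hcm1]

lemma stat_blk2 (hc : 0 < c) (hm : 0 < m) (hcm : c * m ≤ ω) (hcm1 : (c + 1) * m ≤ ω) :
    (Finset.univ.filter fun t : (Δ × Δ) × (Δ × Δ) =>
      (¬(t.1.1 = t.2.1) ∧ ¬(t.1.2 = t.2.2)) ∧
        t.1 ∈ B0 e c m ∧ t.2 ∈ B0 e c m).card
      = (c * (c + 1) * m) * (c * (c + 1) * m - 2 * c) := by
  rw [card_filter_pair]
  have hterm : ∀ p : Δ × Δ, (Finset.univ.filter fun q : Δ × Δ =>
      (¬(p.1 = q.1) ∧ ¬(p.2 = q.2)) ∧ p ∈ B0 e c m ∧ q ∈ B0 e c m).card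
      = if p ∈ B0 e c m then c * (c + 1) * m - 2 * c else 0 := by
    intro p
    by_cases hp : p ∈ B0 e c m
    · rw [if_pos hp, perpoint_blk2 e hc hm hcm hcm1 hp]
    · rw [if_neg hp, Finset.card_eq_zero]
      apply Finset.filter_false_of_mem
      intro q _
      rintro ⟨_, hpB, _⟩
      exact hp hpB
  rw [Finset.sum_congr rfl fun p _ => hterm p, sum_ite_mem_card,
    card_B0 e hc hcm hcm1]

end Stats

lemma lam_conj_aux (ℬ : Finset (Finset (Δ × Δ))) (g : Equiv.Perm (Δ × Δ))
    (hcl : ∀ B ∈ ℬ, B.image ⇑g ∈ ℬ) (hcl' : ∀ B ∈ ℬ, B.image ⇑g⁻¹ ∈ ℬ) (p q : Δ × Δ) :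
    (ℬ.filter fun B => g p ∈ B ∧ g q ∈ B).card = (ℬ.filter fun B => p ∈ B ∧ q ∈ B).card := by
  apply Finset.card_bij' (i := fun B _ => B.image ⇑g⁻¹) (j := fun B _ => B.image ⇑g)
  case hi =>
    intro B hB
    rw [Finset.mem_filter] at hB ⊢
    refine ⟨hcl' B hB.1, ?_, ?_⟩
    · exact Finset.mem_image.mpr ⟨g p, hB.2.1, by simp⟩
    · exact Finset.mem_image.mpr ⟨g q, hB.2.2, by simp⟩
  case hj =>
    intro B hB
    rw [Finset.mem_filter] at hB ⊢
    refine ⟨hcl B hB.1, ?_, ?_⟩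
    · exact Finset.mem_image.mpr ⟨p, hB.2.1, rfl⟩
    · exact Finset.mem_image.mpr ⟨q, hB.2.2, rfl⟩
  case left_inv =>
    intro B _
    rw [Finset.image_image]
    have : (⇑g ∘ ⇑g⁻¹) = id := by funext x; simp
    rw [this, Finset.image_id]
  case right_inv =>
    intro B _
    rw [Finset.image_image]
    have : (⇑g⁻¹ ∘ ⇑g) = id := by funext x; simp
    rw [this, Finset.image_id]

lemma transfer_count {P : (Δ × Δ) × (Δ × Δ) → Prop} [DecidablePred P]
    (B₀ : Finset (Δ × Δ)) (g : Equiv.Perm (Δ × Δ))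
    (hinv : ∀ t : (Δ × Δ) × (Δ × Δ), P t → P (g t.1, g t.2))
    (hinv' : ∀ t : (Δ × Δ) × (Δ × Δ), P t → P (g⁻¹ t.1, g⁻¹ t.2)) :
    (Finset.univ.filter fun t : (Δ × Δ) × (Δ × Δ) =>
      P t ∧ t.1 ∈ B₀.image ⇑g ∧ t.2 ∈ B₀.image ⇑g).card
    = (Finset.univ.filter fun t : (Δ × Δ) × (Δ × Δ) =>
      P t ∧ t.1 ∈ B₀ ∧ t.2 ∈ B₀).card := by
  have hmem : ∀ x : Δ × Δ, x ∈ B₀.image ⇑g → g⁻¹ x ∈ B₀ := by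
    intro x hx
    obtain ⟨w, hw, rfl⟩ := Finset.mem_image.mp hx
    simpa using hw
  apply Finset.card_bij' (i := fun t _ => (g⁻¹ t.1, g⁻¹ t.2)) (j := fun t _ => (g t.1, g t.2))
  case hi =>
    intro t ht
    rw [Finset.mem_filter] at ht ⊢
    exact ⟨Finset.mem_univ _, hinv' t ht.2.1, hmem _ ht.2.2.1, hmem _ ht.2.2.2⟩
  case hj =>
    intro t ht
    rw [Finset.mem_filter] at ht ⊢
    exact ⟨Finset.mem_univ _, hinv t ht.2.1,
      Finset.mem_image_of_mem _ ht.2.2.1, Finset.mem_image_of_mem _ ht.2.2.2⟩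
  case left_inv =>
    intro t _
    simp
  case right_inv =>
    intro t _
    simp

end Stmt14Aux



open Stmt14Aux in
/-- Proposition 2.10: given a positive solution `(m, ω)` (with `ω ≥ 5`) of
Equation (1) for some positive integer `c`, setting `k = c(c+1)m`, there is a
`2`-`(ω², k, λ)` design on `Ω = Δ × Δ` whose block set is a single orbit of the
wreath product `G = Sym(Δ) wr Sym(2)` (in product action) and on which `G`
acts flag-transitively. -/
theorem stmt_14 {Δ : Type*} [Fintype Δ] [DecidableEq Δ]
    (c m ω : ℕ) (hc : 0 < c) (hm : 0 < m) (hω : 5 ≤ ω)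
    (heq : 2 * c * (c + 1) * m = (2 * c - 1) * (ω + 1) + 2)
    (hΔ : Fintype.card Δ = ω)
    (G : Subgroup (Equiv.Perm (Δ × Δ)))
    (hG : ∀ g : Equiv.Perm (Δ × Δ), g ∈ G ↔
      ∃ σ τ : Equiv.Perm Δ,
        (∀ p : Δ × Δ, g p = (σ p.1, τ p.2)) ∨
        (∀ p : Δ × Δ, g p = (σ p.2, τ p.1)))
    (k : ℕ) (hk : k = c * (c + 1) * m) :
    ∃ (lam : ℕ) (ℬ : Finset (Finset (Δ × Δ))),
      1 ≤ lam ∧ ℬ.Nonempty ∧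
      (∀ B ∈ ℬ, B.card = k) ∧
      (∀ p q : Δ × Δ, p ≠ q →
        (ℬ.filter (fun B => p ∈ B ∧ q ∈ B)).card = lam) ∧
      (∀ g ∈ G, ∀ B ∈ ℬ, B.image (⇑g) ∈ ℬ) ∧
      (∃ B₀ ∈ ℬ, ∀ B : Finset (Δ × Δ), B ∈ ℬ ↔ ∃ g ∈ G, B₀.image (⇑g) = B) ∧
      (∀ B₁ ∈ ℬ, ∀ p₁ ∈ B₁, ∀ B₂ ∈ ℬ, ∀ p₂ ∈ B₂,
        ∃ g ∈ G, g p₁ = p₂ ∧ B₁.image (⇑g) = B₂) := by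
  classical
  subst hk
  have hm2 : 2 ≤ m := m_ge_two hc hm hω heq
  have hcm1 : (c + 1) * m ≤ ω := bound_cm hc hm2 heq
  have hcm : c * m ≤ ω := le_trans (Nat.mul_le_mul_right m (Nat.le_succ c)) hcm1
  have hωpos : 0 < ω := by omega
  let e : Δ ≃ Fin ω := Fintype.equivFinOfCardEq hΔ
  set B₀ := B0 e c m with hB₀def
  have hcardB₀ : B₀.card = c * (c + 1) * m := card_B0 e hc hcm hcm1
  have hUntw : ∀ σ τ : Equiv.Perm Δ, Equiv.prodCongr σ τ ∈ G :=
    fun σ τ => (hG _).mpr ⟨σ, τ, Or.inl fun p => rfl⟩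
  set ℬ : Finset (Finset (Δ × Δ)) :=
    Finset.univ.filter (fun B => ∃ g ∈ G, B₀.image ⇑g = B) with hℬdef
  have hmemℬ : ∀ B, B ∈ ℬ ↔ ∃ g ∈ G, B₀.image ⇑g = B := by
    intro B; rw [hℬdef, Finset.mem_filter]; simp
  have hB₀ℬ : B₀ ∈ ℬ := (hmemℬ B₀).mpr ⟨1, one_mem G, by simp⟩
  have hclose : ∀ g ∈ G, ∀ B ∈ ℬ, B.image ⇑g ∈ ℬ := by
    intro g hg B hB
    obtain ⟨g₁, hg₁, rfl⟩ := (hmemℬ B).mp hB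
    refine (hmemℬ _).mpr ⟨g * g₁, mul_mem hg hg₁, ?_⟩
    rw [Finset.image_image]
    have hco : (⇑g ∘ ⇑g₁) = ⇑(g * g₁) := by funext x; simp [Equiv.Perm.mul_apply]
    rw [hco]
  have hcards : ∀ B ∈ ℬ, B.card = c * (c + 1) * m := by
    intro B hB
    obtain ⟨g, hg, rfl⟩ := (hmemℬ B).mp hB
    rw [Finset.card_image_of_injective _ g.injective, hcardB₀]
  have hlamconj : ∀ g ∈ G, ∀ p q : Δ × Δ,
      (ℬ.filter fun B => g p ∈ B ∧ g q ∈ B).card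
        = (ℬ.filter fun B => p ∈ B ∧ q ∈ B).card := by
    intro g hg p q
    exact lam_conj_aux ℬ g (hclose g hg) (hclose g⁻¹ (inv_mem hg)) p q
  have hstab : ∀ p q : Δ × Δ, p ∈ B₀ → q ∈ B₀ →
      ∃ h ∈ G, h p = q ∧ B₀.image ⇑h = B₀ := by
    intro p q hp hq
    obtain ⟨σ, τ, h1, h2, h3⟩ := exists_stab e hc hcm hcm1 hp hq
    exact ⟨Equiv.prodCongr σ τ, hUntw σ τ, Prod.ext h1 h2, h3⟩
  have hflag : ∀ B₁ ∈ ℬ, ∀ p₁ ∈ B₁, ∀ B₂ ∈ ℬ, ∀ p₂ ∈ B₂,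
      ∃ g ∈ G, g p₁ = p₂ ∧ B₁.image ⇑g = B₂ := by
    intro B₁ hB₁ p₁ hp₁ B₂ hB₂ p₂ hp₂
    obtain ⟨g₁, hg₁, rfl⟩ := (hmemℬ B₁).mp hB₁
    obtain ⟨g₂, hg₂, rfl⟩ := (hmemℬ B₂).mp hB₂
    obtain ⟨q₁, hq₁, rfl⟩ := Finset.mem_image.mp hp₁
    obtain ⟨q₂, hq₂, rfl⟩ := Finset.mem_image.mp hp₂
    obtain ⟨h, hhG, hhq, hhB⟩ := hstab q₁ q₂ hq₁ hq₂
    refine ⟨g₂ * h * g₁⁻¹, mul_mem (mul_mem hg₂ hhG) (inv_mem hg₁), ?_, ?_⟩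
    · simp only [Equiv.Perm.mul_apply, Equiv.Perm.inv_def, Equiv.symm_apply_apply]
      rw [hhq]
    · rw [Finset.image_image]
      have hco : (⇑(g₂ * h * g₁⁻¹) ∘ ⇑g₁) = ⇑g₂ ∘ ⇑h := by
        funext x; simp [Equiv.Perm.mul_apply]
      rw [hco, ← Finset.image_image, hhB]
  -- base points
  set α₀ : Δ := e.symm ⟨0, by omega⟩ with hα₀
  set β₁ : Δ := e.symm ⟨1, by omega⟩ with hβ₁
  have heα₀ : ((e α₀ : Fin ω) : ℕ) = 0 := by rw [hα₀, Equiv.apply_symm_apply]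
  have heβ₁ : ((e β₁ : Fin ω) : ℕ) = 1 := by rw [hβ₁, Equiv.apply_symm_apply]
  have hαβ : α₀ ≠ β₁ := by
    intro hcon
    have h0 : ((e α₀ : Fin ω) : ℕ) = ((e β₁ : Fin ω) : ℕ) := by rw [hcon]
    rw [heα₀, heβ₁] at h0
    omega
  have hcmpos : 0 < c * m := Nat.mul_pos hc hm
  have hc1mpos : 1 < (c + 1) * m := by
    have := Nat.mul_le_mul (show 1 ≤ c + 1 by omega) hm2
    omega
  have hp₀B : (α₀, α₀) ∈ B₀ := by
    rw [hB₀def, mem_B0]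
    refine ⟨?_, ?_, ?_⟩
    · show ((e α₀ : Fin ω) : ℕ) < c * m
      rw [heα₀]; omega
    · show ((e α₀ : Fin ω) : ℕ) < (c + 1) * m
      rw [heα₀]; omega
    · show ((e α₀ : Fin ω) : ℕ) / c = ((e α₀ : Fin ω) : ℕ) / (c + 1)
      rw [heα₀, Nat.zero_div, Nat.zero_div]
  have hq₀B : (α₀, β₁) ∈ B₀ := by
    rw [hB₀def, mem_B0]
    refine ⟨?_, ?_, ?_⟩
    · show ((e α₀ : Fin ω) : ℕ) < c * m
      rw [heα₀]; omega
    · show ((e β₁ : Fin ω) : ℕ) < (c + 1) * m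
      rw [heβ₁]; omega
    · show ((e α₀ : Fin ω) : ℕ) / c = ((e β₁ : Fin ω) : ℕ) / (c + 1)
      rw [heα₀, heβ₁, Nat.zero_div, Nat.div_eq_of_lt (by omega)]
  have hp₀q₀ : ((α₀, α₀) : Δ × Δ) ≠ (α₀, β₁) := by
    intro hcon
    exact hαβ (congrArg Prod.snd hcon)
  -- the two candidate values of λ
  set lam1 := (ℬ.filter fun B => ((α₀, α₀) : Δ × Δ) ∈ B ∧ ((α₀, β₁) : Δ × Δ) ∈ B).card with hlam1
  set lam2 := (ℬ.filter fun B => ((α₀, α₀) : Δ × Δ) ∈ B ∧ ((β₁, β₁) : Δ × Δ) ∈ B).card with hlam2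
  have hconst1 : ∀ p q : Δ × Δ, p ≠ q → (p.1 = q.1 ∨ p.2 = q.2) →
      (ℬ.filter fun B => p ∈ B ∧ q ∈ B).card = lam1 := by
    intro p q hpq ht
    obtain ⟨g, hw, hgp, hgq⟩ :=
      trans_t1 (p := ((α₀, α₀) : Δ × Δ)) (q := (α₀, β₁)) hp₀q₀ (Or.inl rfl) hpq ht
    have hgG : g ∈ G := (hG g).mpr hw
    have hcj := hlamconj g hgG (α₀, α₀) (α₀, β₁)
    rw [hgp, hgq] at hcj
    exact hcj.symm ▸ rfl
  have hconst2 : ∀ p q : Δ × Δ, ¬(p.1 = q.1) → ¬(p.2 = q.2) →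
      (ℬ.filter fun B => p ∈ B ∧ q ∈ B).card = lam2 := by
    intro p q h1 h2
    obtain ⟨g, hw, hgp, hgq⟩ :=
      trans_t2 (p := ((α₀, α₀) : Δ × Δ)) (q := (β₁, β₁)) hαβ hαβ h1 h2
    have hgG : g ∈ G := (hG g).mpr hw
    have hcj := hlamconj g hgG (α₀, α₀) (β₁, β₁)
    rw [hgp, hgq] at hcj
    exact hcj.symm ▸ rfl
  -- master double counts
  set T1set := Finset.univ.filter (fun t : (Δ × Δ) × (Δ × Δ) =>
    t.1 ≠ t.2 ∧ (t.1.1 = t.2.1 ∨ t.1.2 = t.2.2)) with hT1def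
  set T2set := Finset.univ.filter (fun t : (Δ × Δ) × (Δ × Δ) =>
    ¬(t.1.1 = t.2.1) ∧ ¬(t.1.2 = t.2.2)) with hT2def
  have hT1card : T1set.card = (ω * ω) * ((ω - 1) + (ω - 1)) := by
    rw [hT1def]
    have := statT1 (Δ := Δ)
    rw [hΔ] at this
    exact this
  have hT2card : T2set.card = (ω * ω) * ((ω - 1) * (ω - 1)) := by
    rw [hT2def]
    have := statT2 (Δ := Δ)
    rw [hΔ] at this
    exact this
  have hE1 : T1set.card * lam1 = ℬ.card * ((c * (c + 1) * m) * (c + (c - 1))) := by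
    have hL : ∑ t ∈ T1set, (ℬ.filter fun B => t.1 ∈ B ∧ t.2 ∈ B).card
        = T1set.card * lam1 := by
      have hterm : ∀ t ∈ T1set, (ℬ.filter fun B => t.1 ∈ B ∧ t.2 ∈ B).card = lam1 := by
        intro t ht
        rw [hT1def, Finset.mem_filter] at ht
        exact hconst1 t.1 t.2 ht.2.1 ht.2.2
      rw [Finset.sum_congr rfl hterm, Finset.sum_const, smul_eq_mul]
    have hR : ∑ t ∈ T1set, (ℬ.filter fun B => t.1 ∈ B ∧ t.2 ∈ B).card
        = ∑ B ∈ ℬ, (T1set.filter fun t => t.1 ∈ B ∧ t.2 ∈ B).card :=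
      sum_card_comm T1set ℬ (fun t B => t.1 ∈ B ∧ t.2 ∈ B)
    have hblk : ∀ B ∈ ℬ, (T1set.filter fun t => t.1 ∈ B ∧ t.2 ∈ B).card
        = (c * (c + 1) * m) * (c + (c - 1)) := by
      intro B hB
      obtain ⟨g, hg, rfl⟩ := (hmemℬ B).mp hB
      rw [hT1def, Finset.filter_filter]
      have hwg : WrForm g := (hG g).mp hg
      have hwg' : WrForm g⁻¹ := (hG g⁻¹).mp (inv_mem hg)
      rw [transfer_count (P := fun t : (Δ × Δ) × (Δ × Δ) =>
          t.1 ≠ t.2 ∧ (t.1.1 = t.2.1 ∨ t.1.2 = t.2.2)) B₀ g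
        (fun t htp => wr_t1 hwg htp) (fun t htp => wr_t1 hwg' htp), hB₀def]
      exact stat_blk1 e hc hcm hcm1
    rw [← hL, hR, Finset.sum_congr rfl hblk, Finset.sum_const, smul_eq_mul]
  have hE2 : T2set.card * lam2 = ℬ.card * ((c * (c + 1) * m) * (c * (c + 1) * m - 2 * c)) := by
    have hL : ∑ t ∈ T2set, (ℬ.filter fun B => t.1 ∈ B ∧ t.2 ∈ B).card
        = T2set.card * lam2 := by
      have hterm : ∀ t ∈ T2set, (ℬ.filter fun B => t.1 ∈ B ∧ t.2 ∈ B).card = lam2 := by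
        intro t ht
        rw [hT2def, Finset.mem_filter] at ht
        exact hconst2 t.1 t.2 ht.2.1 ht.2.2
      rw [Finset.sum_congr rfl hterm, Finset.sum_const, smul_eq_mul]
    have hR : ∑ t ∈ T2set, (ℬ.filter fun B => t.1 ∈ B ∧ t.2 ∈ B).card
        = ∑ B ∈ ℬ, (T2set.filter fun t => t.1 ∈ B ∧ t.2 ∈ B).card :=
      sum_card_comm T2set ℬ (fun t B => t.1 ∈ B ∧ t.2 ∈ B)
    have hblk : ∀ B ∈ ℬ, (T2set.filter fun t => t.1 ∈ B ∧ t.2 ∈ B).card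
        = (c * (c + 1) * m) * (c * (c + 1) * m - 2 * c) := by
      intro B hB
      obtain ⟨g, hg, rfl⟩ := (hmemℬ B).mp hB
      rw [hT2def, Finset.filter_filter]
      have hwg : WrForm g := (hG g).mp hg
      have hwg' : WrForm g⁻¹ := (hG g⁻¹).mp (inv_mem hg)
      rw [transfer_count (P := fun t : (Δ × Δ) × (Δ × Δ) =>
          ¬(t.1.1 = t.2.1) ∧ ¬(t.1.2 = t.2.2)) B₀ g
        (fun t htp => wr_t2 hwg htp) (fun t htp => wr_t2 hwg' htp), hB₀def]
      exact stat_blk2 e hc hm hcm hcm1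
    rw [← hL, hR, Finset.sum_congr rfl hblk, Finset.sum_const, smul_eq_mul]
  -- arithmetic conclusion : lam1 = lam2
  have hk2c : 2 * c + 1 ≤ c * (c + 1) * m := by
    have hA := Nat.mul_le_mul (Nat.mul_le_mul_left c (show 2 ≤ c + 1 by omega)) hm2
    omega
  have hident : ((ω * ω) * ((ω - 1) + (ω - 1))) * ((c * (c + 1) * m) * (c * (c + 1) * m - 2 * c))
      = ((ω * ω) * ((ω - 1) * (ω - 1))) * ((c * (c + 1) * m) * (c + (c - 1))) := by
    have heqZ : 2 * (c:ℤ) * (c + 1) * m = (2 * c - 1) * (ω + 1) + 2 := by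
      have h := heq
      zify [show 1 ≤ 2 * c by omega] at h
      exact h
    zify [show 1 ≤ ω by omega, show 2 * c ≤ c * (c + 1) * m by omega, show 1 ≤ c by omega]
    linear_combination ((ω:ℤ) * ω * ((ω:ℤ) - 1) * ((c:ℤ) * ((c:ℤ) + 1) * (m:ℤ))) * heqZ
  have hlam12 : lam1 = lam2 := by
    have hpos : 0 < ((ω * ω) * ((ω - 1) * (ω - 1))) * ((c * (c + 1) * m) * (c + (c - 1))) := by
      have h1 : 0 < ω - 1 := by omega
      have h2 : 0 < c * (c + 1) * m := Nat.mul_pos (Nat.mul_pos hc (by omega)) hm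
      have h3 : 0 < c + (c - 1) := by omega
      exact Nat.mul_pos (Nat.mul_pos (Nat.mul_pos hωpos hωpos) (Nat.mul_pos h1 h1))
        (Nat.mul_pos h2 h3)
    apply Nat.eq_of_mul_eq_mul_right hpos
    calc lam1 * (((ω * ω) * ((ω - 1) * (ω - 1))) * ((c * (c + 1) * m) * (c + (c - 1))))
        = lam1 * (((ω * ω) * ((ω - 1) + (ω - 1)))
            * ((c * (c + 1) * m) * (c * (c + 1) * m - 2 * c))) := by rw [hident]
      _ = (T1set.card * lam1) * ((c * (c + 1) * m) * (c * (c + 1) * m - 2 * c)) := by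
            rw [hT1card]; ring
      _ = (ℬ.card * ((c * (c + 1) * m) * (c + (c - 1))))
            * ((c * (c + 1) * m) * (c * (c + 1) * m - 2 * c)) := by rw [hE1]
      _ = (T2set.card * lam2) * ((c * (c + 1) * m) * (c + (c - 1))) := by
            rw [hE2]; ring
      _ = lam2 * (((ω * ω) * ((ω - 1) * (ω - 1))) * ((c * (c + 1) * m) * (c + (c - 1)))) := by
            rw [hT2card]; ring
  have hallpairs : ∀ p q : Δ × Δ, p ≠ q →
      (ℬ.filter fun B => p ∈ B ∧ q ∈ B).card = lam1 := by
    intro p q hpq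
    by_cases ht : p.1 = q.1 ∨ p.2 = q.2
    · exact hconst1 p q hpq ht
    · push_neg at ht
      rw [hconst2 p q ht.1 ht.2, hlam12]
  have hlam1pos : 1 ≤ lam1 := by
    rw [hlam1]
    exact Finset.card_pos.mpr ⟨B₀, Finset.mem_filter.mpr ⟨hB₀ℬ, hp₀B, hq₀B⟩⟩
  exact ⟨lam1, ℬ, hlam1pos, ⟨B₀, hB₀ℬ⟩, hcards, hallpairs, hclose, ⟨B₀, hB₀ℬ, hmemℬ⟩, hflag⟩
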